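/- Let X_n be a sequence of non-negative random variables converging in distribution to X with E[X] = ∞, let X_{n,1},…,X_{n,m_n} be i.i.d. copies of X_n with m_n → ∞, and set T_n = X_{n,1} + ⋯ + X_{n,m_n}. Then m_n = o_P(T_n), i.e., m_n/T_n → 0 in probability. -/

import Mathlib

open MeasureTheory ProbabilityTheory Filter
open scoped Topology BoundedContinuousFunction

/-- Truncation `x ↦ min (max x 0) (max A 0)` as a bounded continuous function. -/
noncomputable def truncBCF (A : ℝ) : ℝ →ᵇ ℝ :=
  BoundedContinuousFunction.ofNormedAddCommGroup (fun x => min (max x 0) (max A 0))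
    (by continuity) (max A 0) (fun x => by
      rw [Real.norm_eq_abs, abs_of_nonneg (le_min (le_max_right x 0) (le_max_right A 0))]
      exact min_le_right _ _)

lemma truncBCF_apply (A x : ℝ) : truncBCF A x = min (max x 0) (max A 0) := rfl

lemma truncBCF_nonneg (A x : ℝ) : 0 ≤ truncBCF A x :=
  le_min (le_max_right x 0) (le_max_right A 0)

lemma truncBCF_le (A x : ℝ) : truncBCF A x ≤ max A 0 := min_le_right _ _

lemma truncBCF_le_self (A x : ℝ) (hx : 0 ≤ x) : truncBCF A x ≤ x := by
  rw [truncBCF_apply, max_eq_left hx]; exact min_le_left _ _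

/-- Core quantitative estimate via Chebyshev. -/
lemma core_bound {Ω : Type*} [MeasurableSpace Ω] (μ : Measure Ω) [IsProbabilityMeasure μ]
    (M : ℕ) (hM : 1 ≤ M) (Y : ℕ → Ω → ℝ)
    (hindep : iIndepFun (fun i : Fin M => Y i) μ)
    (hae : ∀ i < M, AEMeasurable (Y i) μ) (hnonneg : ∀ i < M, ∀ᵐ ω ∂μ, 0 ≤ Y i ω)
    (A : ℝ) (hA : 0 ≤ A) (ε : ℝ) (hε : 0 < ε)
    (hmean : ∀ i < M, 2 / ε < ∫ ω, truncBCF A (Y i ω) ∂μ) :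
    μ {ω | ε * (∑ i ∈ Finset.range M, Y i ω) < M} ≤ ENNReal.ofReal (ε ^ 2 * A ^ 2 / M) := by
  classical
  set Z : Fin M → Ω → ℝ := fun i ω => truncBCF A (Y i ω) with hZ
  have hZmeas : ∀ i : Fin M, AEStronglyMeasurable (Z i) μ := fun i =>
    ((truncBCF A).continuous.measurable.comp_aemeasurable (hae i i.2)).aestronglyMeasurable
  have hZbd : ∀ (i : Fin M) ω, 0 ≤ Z i ω ∧ Z i ω ≤ A := fun i ω =>
    ⟨truncBCF_nonneg _ _, (truncBCF_le _ _).trans_eq (max_eq_left hA)⟩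
  have hZmem : ∀ i : Fin M, MemLp (Z i) 2 μ := fun i =>
    MemLp.of_bound (hZmeas i) A (Filter.Eventually.of_forall fun ω => by
      rw [Real.norm_eq_abs, abs_of_nonneg (hZbd i ω).1]; exact (hZbd i ω).2)
  set W : Ω → ℝ := ∑ i : Fin M, Z i with hW
  have hWmem : MemLp W 2 μ := memLp_finset_sum' _ (fun i _ => hZmem i)
  -- variance bound
  have hvar_i : ∀ i : Fin M, variance (Z i) μ ≤ A ^ 2 := by
    intro i
    refine (variance_le_expectation_sq (hZmeas i)).trans ?_
    have : ∫ ω, (Z i ω) ^ 2 ∂μ ≤ ∫ _, A ^ 2 ∂μ := by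
      refine integral_mono (hZmem i).integrable_sq (integrable_const _) (fun ω => ?_)
      have h := hZbd i ω
      nlinarith [h.1, h.2]
    simpa using this
  have hvarW : variance W μ ≤ M * A ^ 2 := by
    rw [hW, IndepFun.variance_sum (fun i _ => hZmem i)
      (fun i _ j _ hij => (hindep.indepFun hij).comp
        (truncBCF A).continuous.measurable (truncBCF A).continuous.measurable)]
    calc ∑ i : Fin M, variance (Z i) μ ≤ ∑ _i : Fin M, A ^ 2 :=
          Finset.sum_le_sum fun i _ => hvar_i i
      _ = M * A ^ 2 := by simp [mul_comm]
  -- expectation lower bound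
  have hZint : ∀ i : Fin M, Integrable (Z i) μ := fun i => (hZmem i).integrable one_le_two
  have hEW : 2 * M / ε < ∫ ω, W ω ∂μ := by
    have : ∫ ω, W ω ∂μ = ∑ i : Fin M, ∫ ω, Z i ω ∂μ := by
      rw [hW]
      simpa using integral_finset_sum Finset.univ (fun i _ => hZint i)
    rw [this]
    have hsum : ∑ _i : Fin M, (2 / ε) < ∑ i : Fin M, ∫ ω, Z i ω ∂μ := by
      refine Finset.sum_lt_sum_of_nonempty ?_ (fun i _ => hmean i i.2)
      exact Finset.univ_nonempty_iff.2 ⟨⟨0, hM⟩⟩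
    calc 2 * M / ε = ∑ _i : Fin M, (2 / ε) := by
          simp [Finset.sum_const]; ring
      _ < _ := hsum
  -- Chebyshev
  have hMpos : (0 : ℝ) < M := by exact_mod_cast hM
  have hc : (0 : ℝ) < M / ε := div_pos hMpos hε
  have hcheb := meas_ge_le_variance_div_sq (μ := μ) hWmem hc
  -- event inclusion
  have hincl : μ {ω | ε * (∑ i ∈ Finset.range M, Y i ω) < M}
      ≤ μ {ω | (M : ℝ) / ε ≤ |W ω - ∫ ω', W ω' ∂μ|} := by
    refine measure_mono_ae ?_
    have hae_all : ∀ᵐ ω ∂μ, ∀ i : Fin M, 0 ≤ Y i ω := by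
      rw [MeasureTheory.ae_all_iff]
      exact fun i => hnonneg i i.2
    filter_upwards [hae_all] with ω hω hωmem
    have hT : ε * (∑ i ∈ Finset.range M, Y i ω) < M := hωmem
    have hWle : W ω ≤ ∑ i ∈ Finset.range M, Y i ω := by
      rw [hW, Finset.sum_apply]
      rw [← Fin.sum_univ_eq_sum_range (fun i => Y i ω)]
      exact Finset.sum_le_sum fun i _ => truncBCF_le_self A (Y i ω) (hω i)
    have hWlt : W ω < M / ε := by
      rw [lt_div_iff₀ hε]
      calc W ω * ε = ε * W ω := mul_comm _ _
        _ ≤ ε * (∑ i ∈ Finset.range M, Y i ω) := by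
            exact mul_le_mul_of_nonneg_left hWle hε.le
        _ < M := hT
    have hgap : (M : ℝ) / ε ≤ (∫ ω', W ω' ∂μ) - W ω := by
      have h1 : 2 * M / ε - M / ε = M / ε := by ring
      linarith [hEW, hWlt]
    show (M : ℝ) / ε ≤ |W ω - ∫ ω', W ω' ∂μ|
    rw [abs_sub_comm]
    exact hgap.trans (le_abs_self _)
  refine hincl.trans (hcheb.trans ?_)
  refine ENNReal.ofReal_le_ofReal ?_
  rw [div_pow, div_le_div_iff₀ (by positivity) (by positivity)]
  have h2 : ε ^ 2 * A ^ 2 * ((M : ℝ) ^ 2 / ε ^ 2) = A ^ 2 * (M : ℝ) ^ 2 := by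
    field_simp
  rw [h2]
  nlinarith [hvarW, hMpos, sq_nonneg A]

theorem stmt12 {Ω : Type*} [MeasurableSpace Ω] (μ : Measure Ω) [IsProbabilityMeasure μ]
    (X : ℕ → Ω → ℝ) (Xlim : Ω → ℝ)
    (hXmeas : ∀ n, Measurable (X n)) (hXlimMeas : Measurable Xlim)
    (hXnonneg : ∀ n ω, 0 ≤ X n ω) (hXlimNonneg : ∀ ω, 0 ≤ Xlim ω)
    (hconv : ∀ f : ℝ →ᵇ ℝ,
      Tendsto (fun n => ∫ ω, f (X n ω) ∂μ) atTop (𝓝 (∫ ω, f (Xlim ω) ∂μ)))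
    (hmean : ∫⁻ ω, ENNReal.ofReal (Xlim ω) ∂μ = ⊤)
    (m : ℕ → ℕ) (hmtop : Tendsto m atTop atTop)
    (Y : ℕ → ℕ → Ω → ℝ)
    (hYindep : ∀ n, iIndepFun
      (fun i : Fin (m n) => Y n i) μ)
    (hYdist : ∀ n i, i < m n → μ.map (Y n i) = μ.map (X n)) :
    ∀ ε > (0 : ℝ), Tendsto (fun n : ℕ =>
      μ {ω | ε * (∑ i ∈ Finset.range (m n), Y n i ω) < (m n : ℝ)}) atTop (𝓝 0) := by
  intro ε hε
  -- Step 1: choose a truncation level A with ∫ min(Xlim, A) > 3/ε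
  obtain ⟨A, hA⟩ : ∃ A : ℕ, ENNReal.ofReal (3 / ε)
      < ∫⁻ ω, ENNReal.ofReal (min (Xlim ω) A) ∂μ := by
    have hsup : (⨆ A : ℕ, ∫⁻ ω, ENNReal.ofReal (min (Xlim ω) A) ∂μ) = ⊤ := by
      rw [← lintegral_iSup (fun A => (hXlimMeas.min measurable_const).ennreal_ofReal)
        (fun a b hab ω => ENNReal.ofReal_le_ofReal
          (min_le_min le_rfl (by exact_mod_cast hab)))]
      rw [← hmean]
      congr 1
      ext ω
      refine le_antisymm (iSup_le fun A => ENNReal.ofReal_le_ofReal (min_le_left _ _)) ?_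
      refine le_iSup_of_le ⌈Xlim ω⌉₊ (le_of_eq ?_)
      rw [min_eq_left (Nat.le_ceil _)]
    have : ENNReal.ofReal (3 / ε) < ⨆ A : ℕ, ∫⁻ ω, ENNReal.ofReal (min (Xlim ω) A) ∂μ := by
      rw [hsup]; exact ENNReal.ofReal_lt_top
    exact lt_iSup_iff.1 this
  -- integral of the truncation of the limit exceeds 3/ε
  have hAlim : 3 / ε < ∫ ω, truncBCF A (Xlim ω) ∂μ := by
    have heq : ∀ ω, truncBCF (A : ℝ) (Xlim ω) = min (Xlim ω) A := fun ω => by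
      rw [truncBCF_apply, max_eq_left (hXlimNonneg ω),
        max_eq_left (by positivity : (0:ℝ) ≤ (A:ℝ))]
    have hlt : ∫⁻ ω, ENNReal.ofReal (min (Xlim ω) A) ∂μ ≤ ENNReal.ofReal A := by
      calc ∫⁻ ω, ENNReal.ofReal (min (Xlim ω) A) ∂μ
          ≤ ∫⁻ _, ENNReal.ofReal A ∂μ :=
            lintegral_mono fun ω => ENNReal.ofReal_le_ofReal (min_le_right _ _)
        _ = ENNReal.ofReal A := by simp
    have hne : ∫⁻ ω, ENNReal.ofReal (min (Xlim ω) A) ∂μ ≠ ⊤ :=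
      (hlt.trans_lt ENNReal.ofReal_lt_top).ne
    have hint : ∫ ω, truncBCF (A : ℝ) (Xlim ω) ∂μ
        = (∫⁻ ω, ENNReal.ofReal (min (Xlim ω) A) ∂μ).toReal := by
      simp_rw [heq]
      rw [integral_eq_lintegral_of_nonneg_ae
        (Filter.Eventually.of_forall fun ω => le_min (hXlimNonneg ω) (by positivity))
        (hXlimMeas.min measurable_const).aestronglyMeasurable]
    rw [hint]
    calc 3 / ε = (ENNReal.ofReal (3 / ε)).toReal := by
          rw [ENNReal.toReal_ofReal (by positivity)]
      _ < _ := ENNReal.toReal_lt_toReal ENNReal.ofReal_ne_top hne |>.2 hA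
  -- Step 2: eventual bound via core_bound
  have h23 : 2 / ε < 3 / ε := by
    rw [div_lt_div_iff₀ hε hε]; nlinarith
  have hev1 : ∀ᶠ n in atTop, 2 / ε < ∫ ω, truncBCF A (X n ω) ∂μ :=
    (hconv (truncBCF A)).eventually (eventually_gt_nhds (h23.trans hAlim))
  have hev2 : ∀ᶠ n in atTop, 1 ≤ m n := hmtop.eventually_ge_atTop 1
  have hXmap1 : ∀ n, μ.map (X n) Set.univ = 1 := fun n => by
    rw [Measure.map_apply (hXmeas n) MeasurableSet.univ]; simp
  have key : ∀ᶠ n in atTop,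
      μ {ω | ε * (∑ i ∈ Finset.range (m n), Y n i ω) < (m n : ℝ)}
        ≤ ENNReal.ofReal (ε ^ 2 * (A : ℝ) ^ 2 / (m n : ℝ)) := by
    filter_upwards [hev1, hev2] with n hn1 hn2
    -- a.e.-measurability of the copies
    have haem : ∀ i < m n, AEMeasurable (Y n i) μ := by
      intro i hi
      by_contra h
      have h0 : μ.map (Y n i) = 0 := Measure.map_of_not_aemeasurable h
      rw [hYdist n i hi] at h0
      have := hXmap1 n
      rw [h0] at this
      simp at this
    -- a.e. nonnegativity of the copies
    have hnn : ∀ i < m n, ∀ᵐ ω ∂μ, 0 ≤ Y n i ω := by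
      intro i hi
      have hset : μ {ω | Y n i ω < 0} = 0 := by
        have h1 : {ω | Y n i ω < 0} = Y n i ⁻¹' Set.Iio 0 := rfl
        have h2 : X n ⁻¹' Set.Iio 0 = ∅ := by
          ext ω; simp [not_lt.2 (hXnonneg n ω)]
        rw [h1, ← Measure.map_apply_of_aemeasurable (haem i hi) measurableSet_Iio,
          hYdist n i hi, Measure.map_apply (hXmeas n) measurableSet_Iio, h2]
        simp
      rw [ae_iff]
      simpa [not_le] using hset
    -- expectation transfer
    have hmean' : ∀ i < m n, 2 / ε < ∫ ω, truncBCF A (Y n i ω) ∂μ := by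
      intro i hi
      have : ∫ ω, truncBCF (A : ℝ) (Y n i ω) ∂μ = ∫ ω, truncBCF (A : ℝ) (X n ω) ∂μ := by
        rw [← integral_map (haem i hi) ((truncBCF (A:ℝ)).continuous.aestronglyMeasurable),
          hYdist n i hi,
          integral_map (hXmeas n).aemeasurable ((truncBCF (A:ℝ)).continuous.aestronglyMeasurable)]
      rw [this]
      exact hn1
    exact core_bound μ (m n) hn2 (Y n) (hYindep n) haem hnn (A : ℝ)
      (by positivity) ε hε hmean'
  -- Step 3: squeeze
  have hlim : Tendsto (fun n => ENNReal.ofReal (ε ^ 2 * (A : ℝ) ^ 2 / (m n : ℝ)))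
      atTop (𝓝 0) := by
    have h1 : Tendsto (fun n => ((m n : ℝ))) atTop atTop :=
      tendsto_natCast_atTop_atTop.comp hmtop
    have h2 : Tendsto (fun n => ε ^ 2 * (A : ℝ) ^ 2 / (m n : ℝ)) atTop (𝓝 0) :=
      Tendsto.div_atTop tendsto_const_nhds h1
    have := (ENNReal.continuous_ofReal.tendsto 0).comp h2
    rwa [ENNReal.ofReal_zero] at this
  refine tendsto_of_tendsto_of_tendsto_of_le_of_le' tendsto_const_nhds hlim
    (Filter.Eventually.of_forall fun n => zero_le) key
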